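/- Let Ω be a finite set, f a probability distribution on Ω, X : Ω → ℝ, and α ∈ [0,1). Then max_{b∈ℝ} ( b − (1/(1−α)) · Σ_ω f_ω · max{b − X(ω), 0} ) = min { Σ_ω ξ_ω X(ω) : ξ ∈ Δ^Ω, ξ_ω ≤ f_ω/(1−α) for all ω }, i.e., the Rockafellar–Uryasev CVaR formula equals its dual robust representation as a minimum over a box-constrained set of probability distributions. -/
import Mathlib


/-- Rockafellar–Uryasev CVaR formula equals its dual robust representation:
`max_b ( b − E_f[max(b−X,0)]/(1−α) ) = min { E_ξ[X] : ξ ∈ Δ^Ω, ξ ≤ f/(1−α) }`. -/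
theorem stmt_3 {Ω : Type*} [Fintype Ω] [Nonempty Ω] (f : Ω → ℝ) (X : Ω → ℝ)
    (hf0 : ∀ ω, 0 ≤ f ω) (hf1 : ∑ ω, f ω = 1) (α : ℝ) (hα0 : 0 ≤ α) (hα1 : α < 1) :
    sSup {v : ℝ | ∃ b : ℝ, v = b - (1 / (1 - α)) * ∑ ω, f ω * max (b - X ω) 0} =
    sInf {v : ℝ | ∃ ξ : Ω → ℝ, (∀ ω, 0 ≤ ξ ω) ∧ (∑ ω, ξ ω = 1) ∧
      (∀ ω, ξ ω ≤ f ω / (1 - α)) ∧ v = ∑ ω, ξ ω * X ω} := by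
  have h1α : (0:ℝ) < 1 - α := by linarith
  set c : ℝ := 1 / (1 - α) with hc
  have hc0 : 0 < c := by positivity
  have hc1 : c * (1 - α) = 1 := by rw [hc]; field_simp
  -- weak duality
  have weak : ∀ b : ℝ, ∀ ξ : Ω → ℝ, (∀ ω, 0 ≤ ξ ω) → (∑ ω, ξ ω = 1) →
      (∀ ω, ξ ω ≤ f ω / (1 - α)) →
      b - c * ∑ ω, f ω * max (b - X ω) 0 ≤ ∑ ω, ξ ω * X ω := by
    intro b ξ hξ0 hξ1 hξc
    have key : ∀ ω, -(c * (f ω * max (b - X ω) 0)) ≤ ξ ω * (X ω - b) := by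
      intro ω
      rcases le_total b (X ω) with h | h
      · rw [max_eq_right (by linarith)]
        nlinarith [hξ0 ω, hf0 ω]
      · rw [max_eq_left (by linarith)]
        have h2 : ξ ω ≤ c * f ω := by
          have h3 := hξc ω
          have h4 : f ω / (1 - α) = c * f ω := by rw [hc]; ring
          linarith [h4 ▸ h3]
        nlinarith
    have hsum : ∑ ω, -(c * (f ω * max (b - X ω) 0)) ≤ ∑ ω, ξ ω * (X ω - b) :=
      Finset.sum_le_sum fun ω _ => key ω
    have e1 : ∑ ω, -(c * (f ω * max (b - X ω) 0)) =
        -(c * ∑ ω, f ω * max (b - X ω) 0) := by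
      rw [Finset.mul_sum]
      simp
    have e2 : ∑ ω, ξ ω * (X ω - b) = (∑ ω, ξ ω * X ω) - b := by
      have e3 : ∑ ω, ξ ω * (X ω - b) = (∑ ω, ξ ω * X ω) - (∑ ω, ξ ω) * b := by
        rw [Finset.sum_mul, ← Finset.sum_sub_distrib]
        exact Finset.sum_congr rfl fun ω _ => by ring
      rw [e3, hξ1, one_mul]
    rw [e1, e2] at hsum
    linarith
  -- construction of the optimal quantile b
  set F : ℝ → ℝ := fun t => ∑ ω, if X ω ≤ t then f ω else 0 with hF
  have huniv : (Finset.univ : Finset Ω).Nonempty := Finset.univ_nonempty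
  set M : ℝ := Finset.univ.sup' huniv X with hM
  have hFM : F M = 1 := by
    rw [hF, ← hf1]
    exact Finset.sum_congr rfl fun ω _ => if_pos (Finset.le_sup' X (Finset.mem_univ ω))
  set T : Finset ℝ := (Finset.univ.image X).filter (fun t => 1 - α ≤ F t) with hT
  have hMT : M ∈ T := by
    rw [hT]
    refine Finset.mem_filter.mpr ⟨?_, by rw [hFM]; linarith⟩
    obtain ⟨ω, _, hω⟩ := Finset.exists_mem_eq_sup' huniv X
    exact Finset.mem_image.mpr ⟨ω, Finset.mem_univ ω, hω.symm⟩
  have hTne : T.Nonempty := ⟨M, hMT⟩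
  set b : ℝ := T.min' hTne with hb
  have hbT : b ∈ T := T.min'_mem hTne
  have hbF : 1 - α ≤ F b := (Finset.mem_filter.mp hbT).2
  set G : ℝ := ∑ ω, if X ω < b then f ω else 0 with hG
  set p : ℝ := ∑ ω, if X ω = b then f ω else 0 with hp
  have hGp : G + p = F b := by
    rw [hG, hp, hF, ← Finset.sum_add_distrib]
    refine Finset.sum_congr rfl fun ω _ => ?_
    by_cases h1 : X ω < b
    · rw [if_pos h1, if_neg (ne_of_lt h1), if_pos h1.le, add_zero]
    · by_cases h2 : X ω = b
      · rw [if_neg h1, if_pos h2, if_pos h2.le, zero_add]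
      · have h3 : ¬ X ω ≤ b := fun h => (lt_or_eq_of_le h).elim h1 h2
        rw [if_neg h1, if_neg h2, if_neg h3, add_zero]
  have hG0 : 0 ≤ G := Finset.sum_nonneg fun ω _ => by
    split_ifs
    · exact hf0 ω
    · exact le_refl 0
  have hp0 : 0 ≤ p := Finset.sum_nonneg fun ω _ => by
    split_ifs
    · exact hf0 ω
    · exact le_refl 0
  have hGα : G ≤ 1 - α := by
    by_contra hcon
    push_neg at hcon
    set A : Finset Ω := Finset.univ.filter (fun ω => X ω < b) with hA
    have hAne : A.Nonempty := by
      by_contra hA0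
      rw [Finset.not_nonempty_iff_eq_empty] at hA0
      have hG00 : G = 0 := by
        rw [hG]
        refine Finset.sum_eq_zero fun ω _ => ?_
        rw [if_neg]
        intro hlt
        have : ω ∈ A := Finset.mem_filter.mpr ⟨Finset.mem_univ ω, hlt⟩
        rw [hA0] at this
        exact absurd this (Finset.notMem_empty ω)
      linarith
    obtain ⟨ω', hω'A, hω'⟩ := Finset.exists_mem_eq_sup' hAne X
    set t' : ℝ := A.sup' hAne X with ht'
    have ht'b : t' < b := by
      rw [hω']
      exact (Finset.mem_filter.mp hω'A).2
    have hFt' : G ≤ F t' := by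
      rw [hG, hF]
      refine Finset.sum_le_sum fun ω _ => ?_
      by_cases h1 : X ω < b
      · have hle : X ω ≤ t' := by
          rw [ht']
          exact Finset.le_sup' X (Finset.mem_filter.mpr ⟨Finset.mem_univ ω, h1⟩)
        rw [if_pos h1, if_pos hle]
      · rw [if_neg h1]
        split_ifs
        · exact hf0 ω
        · exact le_refl 0
    have ht'T : t' ∈ T := by
      rw [hT]
      refine Finset.mem_filter.mpr ⟨?_, by linarith⟩
      exact Finset.mem_image.mpr ⟨ω', Finset.mem_univ ω', hω'.symm⟩
    have := T.min'_le t' ht'T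
    linarith
  have hcG1 : c * G ≤ 1 := by nlinarith
  have h1cF : 1 ≤ c * F b := by nlinarith
  set θ : ℝ := if p = 0 then 0 else (1 - c * G) / (c * p) with hθ
  have hθ0 : 0 ≤ θ := by
    rw [hθ]
    split_ifs with h
    · exact le_refl 0
    · have hppos : 0 < p := lt_of_le_of_ne hp0 (Ne.symm h)
      exact div_nonneg (by linarith) (by positivity)
  have hθ1 : θ ≤ 1 := by
    rw [hθ]
    split_ifs with h
    · linarith
    · have hppos : 0 < p := lt_of_le_of_ne hp0 (Ne.symm h)
      rw [div_le_one (by positivity)]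
      nlinarith [hGp]
  have hθp : c * p * θ = 1 - c * G := by
    rw [hθ]
    split_ifs with h
    · have hFG : F b = G := by rw [← hGp, h, add_zero]
      rw [hFG] at h1cF
      have hcg : c * G = 1 := le_antisymm hcG1 h1cF
      rw [h]
      simp only [mul_zero, zero_mul]
      linarith
    · have hppos : 0 < p := lt_of_le_of_ne hp0 (Ne.symm h)
      field_simp
  set ξ : Ω → ℝ := fun ω => if X ω < b then c * f ω
    else if X ω = b then c * f ω * θ else 0 with hξ
  have hξ0 : ∀ ω, 0 ≤ ξ ω := by
    intro ω
    rw [hξ]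
    dsimp only
    split_ifs
    · exact mul_nonneg hc0.le (hf0 ω)
    · exact mul_nonneg (mul_nonneg hc0.le (hf0 ω)) hθ0
    · exact le_refl 0
  have hξc : ∀ ω, ξ ω ≤ f ω / (1 - α) := by
    intro ω
    have hcf : f ω / (1 - α) = c * f ω := by rw [hc]; ring
    rw [hξ, hcf]
    dsimp only
    split_ifs
    · exact le_refl _
    · exact mul_le_of_le_one_right (mul_nonneg hc0.le (hf0 ω)) hθ1
    · exact mul_nonneg hc0.le (hf0 ω)
  have hξ1 : ∑ ω, ξ ω = 1 := by
    have hsplit : ∑ ω, ξ ω = c * G + c * θ * p := by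
      rw [hG, hp, Finset.mul_sum, Finset.mul_sum, ← Finset.sum_add_distrib]
      refine Finset.sum_congr rfl fun ω _ => ?_
      rw [hξ]
      dsimp only
      by_cases h1 : X ω < b
      · rw [if_pos h1, if_pos h1, if_neg (ne_of_lt h1), mul_zero, add_zero]
      · by_cases h2 : X ω = b
        · rw [if_neg h1, if_pos h2, if_neg h1, if_pos h2, mul_zero, zero_add]
          ring
        · rw [if_neg h1, if_neg h2, if_neg h1, if_neg h2, mul_zero, mul_zero, add_zero]
    rw [hsplit]
    linear_combination hθp
  set SX : ℝ := ∑ ω, if X ω < b then f ω * X ω else 0 with hSX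
  have hmax : ∑ ω, f ω * max (b - X ω) 0 = b * G - SX := by
    rw [hG, hSX, Finset.mul_sum, ← Finset.sum_sub_distrib]
    refine Finset.sum_congr rfl fun ω _ => ?_
    by_cases h1 : X ω < b
    · rw [if_pos h1, if_pos h1, max_eq_left (by linarith)]
      ring
    · rw [if_neg h1, if_neg h1, max_eq_right (by linarith [not_lt.mp h1])]
      ring
  have hξX : ∑ ω, ξ ω * X ω = c * SX + c * θ * p * b := by
    have hsplit : ∑ ω, ξ ω * X ω =
        ∑ ω, (c * (if X ω < b then f ω * X ω else 0)
          + (c * θ * b) * (if X ω = b then f ω else 0)) := by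
      refine Finset.sum_congr rfl fun ω _ => ?_
      rw [hξ]
      dsimp only
      by_cases h1 : X ω < b
      · rw [if_pos h1, if_pos h1, if_neg (ne_of_lt h1)]
        ring
      · by_cases h2 : X ω = b
        · rw [if_neg h1, if_pos h2, if_neg h1, if_pos h2, h2]
          ring
        · rw [if_neg h1, if_neg h2, if_neg h1, if_neg h2]
          ring
    rw [hsplit, Finset.sum_add_distrib, ← Finset.mul_sum, ← Finset.mul_sum, ← hSX, ← hp]
    ring
  have hval : b - c * ∑ ω, f ω * max (b - X ω) 0 = ∑ ω, ξ ω * X ω := by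
    rw [hmax, hξX]
    linear_combination (-b) * hθp
  -- assemble
  have hmemP : (b - c * ∑ ω, f ω * max (b - X ω) 0) ∈
      {v : ℝ | ∃ b : ℝ, v = b - c * ∑ ω, f ω * max (b - X ω) 0} := ⟨b, rfl⟩
  have hmemD : (∑ ω, ξ ω * X ω) ∈
      {v : ℝ | ∃ ξ : Ω → ℝ, (∀ ω, 0 ≤ ξ ω) ∧ (∑ ω, ξ ω = 1) ∧
        (∀ ω, ξ ω ≤ f ω / (1 - α)) ∧ v = ∑ ω, ξ ω * X ω} := ⟨ξ, hξ0, hξ1, hξc, rfl⟩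
  have hub : ∀ v ∈ {v : ℝ | ∃ b : ℝ, v = b - c * ∑ ω, f ω * max (b - X ω) 0},
      v ≤ ∑ ω, ξ ω * X ω := by
    rintro v ⟨b', rfl⟩
    exact weak b' ξ hξ0 hξ1 hξc
  have hlb : ∀ v ∈ {v : ℝ | ∃ ξ : Ω → ℝ, (∀ ω, 0 ≤ ξ ω) ∧ (∑ ω, ξ ω = 1) ∧
      (∀ ω, ξ ω ≤ f ω / (1 - α)) ∧ v = ∑ ω, ξ ω * X ω},
      (b - c * ∑ ω, f ω * max (b - X ω) 0) ≤ v := by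
    rintro v ⟨ξ', h0', h1', hc', rfl⟩
    exact weak b ξ' h0' h1' hc'
  have h1 : sSup {v : ℝ | ∃ b : ℝ, v = b - c * ∑ ω, f ω * max (b - X ω) 0} ≤
      ∑ ω, ξ ω * X ω := csSup_le ⟨_, hmemP⟩ hub
  have h2 : (b - c * ∑ ω, f ω * max (b - X ω) 0) ≤
      sSup {v : ℝ | ∃ b : ℝ, v = b - c * ∑ ω, f ω * max (b - X ω) 0} :=
    le_csSup ⟨_, hub⟩ hmemP
  have h3 : (b - c * ∑ ω, f ω * max (b - X ω) 0) ≤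
      sInf {v : ℝ | ∃ ξ : Ω → ℝ, (∀ ω, 0 ≤ ξ ω) ∧ (∑ ω, ξ ω = 1) ∧
        (∀ ω, ξ ω ≤ f ω / (1 - α)) ∧ v = ∑ ω, ξ ω * X ω} :=
    le_csInf ⟨_, hmemD⟩ hlb
  have h4 : sInf {v : ℝ | ∃ ξ : Ω → ℝ, (∀ ω, 0 ≤ ξ ω) ∧ (∑ ω, ξ ω = 1) ∧
      (∀ ω, ξ ω ≤ f ω / (1 - α)) ∧ v = ∑ ω, ξ ω * X ω} ≤ ∑ ω, ξ ω * X ω :=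
    csInf_le ⟨_, hlb⟩ hmemD
  linarith
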